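/- Let Γ be a strictly Deza graph with parameters (n, k, b, a) with k = b + 1 and β(v) > 1 for every vertex v. If x is a vertex of type (A) and xᵢ ∈ B(x), then B[x] = B[xᵢ] and B(xᵢ) ∩ N(xᵢ) = ∅; in particular, every vertex of B(x) is of type (A). -/

import Mathlib

open Finset SimpleGraph

universe u v

/-- The number of common neighbours of two vertices. -/
def commonNbrs {V : Type u} [Fintype V] [DecidableEq V] (G : SimpleGraph V)
    [DecidableRel G.Adj] (x y : V) : ℕ :=
  (G.neighborFinset x ∩ G.neighborFinset y).card

/-- `G` is a Deza graph with parameters `(n, k, b, a)`: a nonempty `k`-regular graph on `n`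
vertices in which any two distinct vertices have either `b` or `a` common neighbours,
where `b ≥ a`. -/
def IsDezaGraph {V : Type u} [Fintype V] [DecidableEq V] (G : SimpleGraph V)
    [DecidableRel G.Adj] (n k b a : ℕ) : Prop :=
  G ≠ ⊥ ∧ Fintype.card V = n ∧ G.IsRegularOfDegree k ∧ a ≤ b ∧
    ∀ x y : V, x ≠ y → commonNbrs G x y = b ∨ commonNbrs G x y = a

/-- `G` is a strictly Deza graph with parameters `(n, k, b, a)`: a Deza graph of
diameter 2 that is not strongly regular. -/
def IsStrictlyDezaGraph {V : Type u} [Fintype V] [DecidableEq V] (G : SimpleGraph V)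
    [DecidableRel G.Adj] (n k b a : ℕ) : Prop :=
  IsDezaGraph G n k b a ∧ G.Connected ∧ (∀ x y : V, G.dist x y ≤ 2) ∧
    (∃ x y : V, G.dist x y = 2) ∧ ¬ ∃ ℓ μ : ℕ, G.IsSRGWith n k ℓ μ

/-- `B(v)`: the set of vertices `u ≠ v` having exactly `b` common neighbours with `v`. -/
def dezaB {V : Type u} [Fintype V] [DecidableEq V] (G : SimpleGraph V)
    [DecidableRel G.Adj] (b : ℕ) (v : V) : Finset V :=
  univ.filter fun u => u ≠ v ∧ commonNbrs G u v = b

/-- `A(v)`: the set of vertices `u ≠ v` having exactly `a` common neighbours with `v`. -/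
def dezaA {V : Type u} [Fintype V] [DecidableEq V] (G : SimpleGraph V)
    [DecidableRel G.Adj] (a : ℕ) (v : V) : Finset V :=
  univ.filter fun u => u ≠ v ∧ commonNbrs G u v = a

/-- `B[v] = B(v) ∪ {v}`. -/
def dezaBc {V : Type u} [Fintype V] [DecidableEq V] (G : SimpleGraph V)
    [DecidableRel G.Adj] (b : ℕ) (v : V) : Finset V :=
  insert v (dezaB G b v)

/-- A vertex `v` is of type (A) if `B(v) ∩ N(v) = ∅`. -/
def IsTypeA {V : Type u} [Fintype V] [DecidableEq V] (G : SimpleGraph V)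
    [DecidableRel G.Adj] (b : ℕ) (v : V) : Prop :=
  dezaB G b v ∩ G.neighborFinset v = ∅

/-- A vertex `v` is of type (B) if `B(v) ⊆ N(v)`. -/
def IsTypeB {V : Type u} [Fintype V] [DecidableEq V] (G : SimpleGraph V)
    [DecidableRel G.Adj] (b : ℕ) (v : V) : Prop :=
  dezaB G b v ⊆ G.neighborFinset v

/-- A vertex `v` is of type (C) if `|B(v) ∩ N(v)| = 1`. -/
def IsTypeC {V : Type u} [Fintype V] [DecidableEq V] (G : SimpleGraph V)
    [DecidableRel G.Adj] (b : ℕ) (v : V) : Prop :=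
  (dezaB G b v ∩ G.neighborFinset v).card = 1

/-- A vertex `x` of type (A) is of type (A1) if there exists `y ∈ N(x)` with
`N(x) \ N(xᵢ) = {y}` for every `xᵢ ∈ B(x)`. -/
def IsTypeA1 {V : Type u} [Fintype V] [DecidableEq V] (G : SimpleGraph V)
    [DecidableRel G.Adj] (b : ℕ) (x : V) : Prop :=
  IsTypeA G b x ∧ ∃ y ∈ G.neighborFinset x,
    ∀ xi ∈ dezaB G b x, G.neighborFinset x \ G.neighborFinset xi = {y}

/-- A vertex `x` of type (A) is of type (A2) if there exists `z ∉ N[x]` with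
`N(xᵢ) \ N(x) = {z}` for every `xᵢ ∈ B(x)`. -/
def IsTypeA2 {V : Type u} [Fintype V] [DecidableEq V] (G : SimpleGraph V)
    [DecidableRel G.Adj] (b : ℕ) (x : V) : Prop :=
  IsTypeA G b x ∧ ∃ z ∉ insert x (G.neighborFinset x),
    ∀ xi ∈ dezaB G b x, G.neighborFinset xi \ G.neighborFinset x = {z}

/-- The complete multipartite graph with `m` parts of size `t`. -/
def completeMultipartiteGr (m t : ℕ) : SimpleGraph (Fin m × Fin t) where
  Adj u v := u.1 ≠ v.1
  symm := ⟨fun _ _ h => Ne.symm h⟩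
  loopless := ⟨fun _ h => h rfl⟩

/-- The 2-clique extension of a graph `H`: vertices `(u, i)` and `(v, j)` are adjacent
iff `u ~ v` in `H`, or `u = v` and `i ≠ j`. -/
def cliqueExt2 {W : Type v} (H : SimpleGraph W) : SimpleGraph (W × Fin 2) where
  Adj u v := H.Adj u.1 v.1 ∨ (u.1 = v.1 ∧ u.2 ≠ v.2)
  symm := by
    constructor
    intro u v h
    rcases h with h | ⟨h1, h2⟩
    · exact Or.inl h.symm
    · exact Or.inr ⟨h1.symm, h2.symm⟩
  loopless := by
    constructor
    intro u h
    rcases h with h | ⟨_, h2⟩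
    · exact H.irrefl h
    · exact h2 rfl

section DezaAux
set_option linter.unusedSectionVars false

variable {V : Type u} [Fintype V] [DecidableEq V] {G : SimpleGraph V}
  [DecidableRel G.Adj] {n k b a : ℕ}

private lemma commonNbrs_comm (G : SimpleGraph V) [DecidableRel G.Adj] (x y : V) :
    commonNbrs G x y = commonNbrs G y x := by
  unfold commonNbrs; rw [Finset.inter_comm]

private lemma card_cn (G : SimpleGraph V) [DecidableRel G.Adj] (x y : V) :
    Fintype.card (G.commonNeighbors x y) = commonNbrs G x y := by
  rw [commonNbrs, ← Set.toFinset_card]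
  congr 1
  ext v
  rw [Set.mem_toFinset]
  simp [SimpleGraph.commonNeighbors]

private lemma hdeg (hG : IsStrictlyDezaGraph G n k b a) (v : V) :
    (G.neighborFinset v).card = k := hG.1.2.2.1 v

private lemma hpair (hG : IsStrictlyDezaGraph G n k b a) {u v : V} (h : u ≠ v) :
    commonNbrs G u v = b ∨ commonNbrs G u v = a := hG.1.2.2.2.2 u v h

private lemma hab (hG : IsStrictlyDezaGraph G n k b a) : a < b := by
  rcases Nat.lt_or_ge a b with h | h
  · exact h
  · exfalso
    have hba : b = a := le_antisymm h hG.1.2.2.2.1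
    apply hG.2.2.2.2
    refine ⟨b, b, hG.1.2.1, hG.1.2.2.1, ?_, ?_⟩
    · intro v w hvw
      rw [card_cn]
      rcases hpair hG (G.ne_of_adj hvw) with h' | h'
      · exact h'
      · rw [h', hba]
    · intro v w hne hnadj
      rw [card_cn]
      rcases hpair hG hne with h' | h'
      · exact h'
      · rw [h', hba]

private lemma hpos (hG : IsStrictlyDezaGraph G n k b a) {u v : V} (hne : u ≠ v)
    (hnadj : ¬ G.Adj u v) : commonNbrs G u v ≠ 0 := by
  have hle : G.dist u v ≤ 2 := hG.2.2.1 u v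
  have h0 : G.dist u v ≠ 0 := by
    rw [ne_eq, hG.2.1.dist_eq_zero_iff]; exact hne
  have h1 : G.dist u v ≠ 1 := fun h => hnadj (SimpleGraph.dist_eq_one_iff_adj.mp h)
  obtain ⟨p, hp⟩ := SimpleGraph.exists_walk_of_dist_ne_zero h0
  have h2 : p.length = 2 := by omega
  intro hc
  have hemp : G.neighborFinset u ∩ G.neighborFinset v = ∅ := Finset.card_eq_zero.mp hc
  have hmid : ∃ m, G.Adj u m ∧ G.Adj m v := by
    cases p with
    | nil => simp at h2
    | cons hadj q =>
      cases q with
      | nil => simp at h2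
      | cons hadj2 r =>
        have hr : r.length = 0 := by simp only [SimpleGraph.Walk.length_cons] at h2; omega
        have hm := SimpleGraph.Walk.eq_of_length_eq_zero hr
        subst hm
        exact ⟨_, hadj, hadj2⟩
  obtain ⟨m, h1m, h2m⟩ := hmid
  have hmem : m ∈ G.neighborFinset u ∩ G.neighborFinset v :=
    Finset.mem_inter.mpr ⟨(SimpleGraph.mem_neighborFinset _ _ _).mpr h1m,
      (SimpleGraph.mem_neighborFinset _ _ _).mpr h2m.symm⟩
  rw [hemp] at hmem
  exact Finset.notMem_empty _ hmem

end DezaAux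
section DezaAux2
set_option linter.unusedSectionVars false

variable {V : Type u} [Fintype V] [DecidableEq V] {G : SimpleGraph V}
  [DecidableRel G.Adj] {n k b a : ℕ}

private lemma mem_nbr_symm {u v : V} (h : u ∈ G.neighborFinset v) :
    v ∈ G.neighborFinset u :=
  (SimpleGraph.mem_neighborFinset _ _ _).mpr ((SimpleGraph.mem_neighborFinset _ _ _).mp h).symm

private lemma not_mem_nbr_symm {u v : V} (h : u ∉ G.neighborFinset v) :
    v ∉ G.neighborFinset u := fun hc => h (mem_nbr_symm hc)

private lemma not_self_nbr {u v : V} (h : u ∈ G.neighborFinset v) : v ≠ u :=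
  G.ne_of_adj ((SimpleGraph.mem_neighborFinset _ _ _).mp h)

private lemma inter_union_sdiff' (s t : Finset V) : (s ∩ t) ∪ (s \ t) = s := by
  ext v
  simp only [Finset.mem_union, Finset.mem_inter, Finset.mem_sdiff]
  tauto

private lemma inter_eq_erase {s t : Finset V} {y : V} (h : s \ t = {y}) :
    s ∩ t = s.erase y := by
  rw [Finset.erase_eq, ← h, Finset.sdiff_sdiff_self_left]

private lemma split_nbhd {s t : Finset V} {z : V} (h : t \ s = {z}) :
    t = insert z (t ∩ s) := by
  ext w
  simp only [Finset.mem_insert, Finset.mem_inter]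
  constructor
  · intro hw
    by_cases hws : w ∈ s
    · exact Or.inr ⟨hw, hws⟩
    · left
      have : w ∈ t \ s := Finset.mem_sdiff.mpr ⟨hw, hws⟩
      rw [h] at this
      exact Finset.mem_singleton.mp this
  · rintro (hz | ⟨hw, _⟩)
    · subst hz
      exact (Finset.mem_sdiff.mp (h ▸ Finset.mem_singleton_self _)).1
    · exact hw

private lemma pair_extract {s : Finset V} {u : V} (h2 : s.card = 2) (hu : u ∈ s) :
    ∃ p, p ≠ u ∧ p ∈ s ∧ s = {u, p} := by
  obtain ⟨p, q, hpq, rfl⟩ := Finset.card_eq_two.mp h2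
  rcases Finset.mem_insert.mp hu with rfl | hq
  · exact ⟨q, hpq.symm, by simp, rfl⟩
  · have : u = q := Finset.mem_singleton.mp hq
    subst this
    exact ⟨p, hpq, by simp, Finset.pair_comm p u⟩

private lemma pair_inter_card_zero {p q r s : V} (h1 : p ≠ r) (h2 : p ≠ s)
    (h3 : q ≠ r) (h4 : q ≠ s) : (({p, q} : Finset V) ∩ {r, s}).card = 0 := by
  rw [Finset.card_eq_zero, Finset.eq_empty_iff_forall_notMem]
  intro t ht
  simp only [Finset.mem_inter, Finset.mem_insert, Finset.mem_singleton] at ht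
  obtain ⟨hl, hr⟩ := ht
  rcases hl with rfl | rfl <;> rcases hr with rfl | rfl
  exacts [h1 rfl, h2 rfl, h3 rfl, h4 rfl]

private lemma pair_inter_one_11 {p q s : V} (h1 : q ≠ p) (h2 : q ≠ s) :
    (({p, q} : Finset V) ∩ {p, s}).card = 1 := by
  rw [Finset.insert_inter_of_mem (Finset.mem_insert_self p {s}),
    Finset.singleton_inter_of_notMem (by simp [h1, h2])]
  simp

private lemma pair_inter_one_12 {p q s : V} (h1 : q ≠ s) (h2 : q ≠ p) :
    (({p, q} : Finset V) ∩ {s, p}).card = 1 := by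
  rw [Finset.pair_comm s p]; exact pair_inter_one_11 h2 h1

private lemma pair_inter_one_21 {p q s : V} (h1 : p ≠ q) (h2 : p ≠ s) :
    (({p, q} : Finset V) ∩ {q, s}).card = 1 := by
  rw [Finset.pair_comm p q]; exact pair_inter_one_11 h1 h2

private lemma pair_inter_one_22 {p q r : V} (h1 : p ≠ r) (h2 : p ≠ q) :
    (({p, q} : Finset V) ∩ {r, q}).card = 1 := by
  rw [Finset.pair_comm p q, Finset.pair_comm r q]; exact pair_inter_one_11 h2 h1

end DezaAux2
section DezaAux3
set_option linter.unusedSectionVars false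

variable {V : Type u} [Fintype V] [DecidableEq V] {G : SimpleGraph V}
  [DecidableRel G.Adj] {n k b a : ℕ}

private lemma hnbr (hG : IsStrictlyDezaGraph G n k b a) {x c : V} (hA : IsTypeA G b x)
    (hc : c ∈ G.neighborFinset x) :
    (G.neighborFinset c ∩ G.neighborFinset x).card = a := by
  have hne : c ≠ x := (not_self_nbr hc).symm
  have hA' : dezaB G b x ∩ G.neighborFinset x = ∅ := hA
  rcases hpair hG hne with h | h
  · exfalso
    have hmem : c ∈ dezaB G b x ∩ G.neighborFinset x :=
      Finset.mem_inter.mpr ⟨by simp [dezaB, hne, h], hc⟩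
    rw [hA'] at hmem
    exact Finset.notMem_empty _ hmem
  · exact h

/-- Structure of a vertex in `B(x)` for a type (A) vertex `x`, when `b = k - 1`. -/
private lemma exchB (hG : IsStrictlyDezaGraph G n k b a) (hk : k = b + 1) {x xi : V}
    (hA : IsTypeA G b x) (hxi : xi ∈ dezaB G b x) :
    ∃ yi zi : V, (G.neighborFinset x \ G.neighborFinset xi = {yi}) ∧
      (G.neighborFinset xi \ G.neighborFinset x = {zi}) ∧
      G.neighborFinset xi = insert zi ((G.neighborFinset x).erase yi) ∧
      yi ∈ G.neighborFinset x ∧ zi ∈ G.neighborFinset xi ∧ zi ∉ G.neighborFinset x ∧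
      xi ∉ G.neighborFinset x ∧ x ∉ G.neighborFinset xi ∧ ¬ G.Adj x xi ∧ xi ≠ x := by
  have hA' : dezaB G b x ∩ G.neighborFinset x = ∅ := hA
  obtain ⟨hne, hcom⟩ : xi ≠ x ∧ commonNbrs G xi x = b := by
    simpa [dezaB] using hxi
  have hxinx : xi ∉ G.neighborFinset x := by
    intro hmem
    have : xi ∈ dezaB G b x ∩ G.neighborFinset x := Finset.mem_inter.mpr ⟨hxi, hmem⟩
    rw [hA'] at this
    exact Finset.notMem_empty _ this
  have hnadj : ¬ G.Adj x xi := fun h => hxinx ((SimpleGraph.mem_neighborFinset _ _ _).mpr h)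
  have hxnxi : x ∉ G.neighborFinset xi := not_mem_nbr_symm hxinx
  have hcx := hdeg hG x
  have hcxi := hdeg hG xi
  have hint : (G.neighborFinset xi ∩ G.neighborFinset x).card = b := hcom
  have hint' : (G.neighborFinset x ∩ G.neighborFinset xi).card = b := by
    rwa [Finset.inter_comm]
  have h1 : (G.neighborFinset x \ G.neighborFinset xi).card = 1 := by
    have := Finset.card_inter_add_card_sdiff (G.neighborFinset x) (G.neighborFinset xi)
    omega
  have h2 : (G.neighborFinset xi \ G.neighborFinset x).card = 1 := by
    have := Finset.card_inter_add_card_sdiff (G.neighborFinset xi) (G.neighborFinset x)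
    omega
  obtain ⟨yi, hyi⟩ := Finset.card_eq_one.mp h1
  obtain ⟨zi, hzi⟩ := Finset.card_eq_one.mp h2
  have hyim : yi ∈ G.neighborFinset x :=
    (Finset.mem_sdiff.mp (hyi ▸ Finset.mem_singleton_self yi)).1
  have hzimem : zi ∈ G.neighborFinset xi :=
    (Finset.mem_sdiff.mp (hzi ▸ Finset.mem_singleton_self zi)).1
  have hzim : zi ∉ G.neighborFinset x :=
    (Finset.mem_sdiff.mp (hzi ▸ Finset.mem_singleton_self zi)).2
  refine ⟨yi, zi, hyi, hzi, ?_, hyim, hzimem, hzim, hxinx, hxnxi, hnadj, hne⟩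
  have := split_nbhd hzi
  rwa [Finset.inter_comm, inter_eq_erase hyi] at this

/-- If `u ~ v` and they have `b = k - 1` common neighbours, then
`N(u) = {v} ∪ (N(v) \ {u})`. -/
private lemma adjExch (hG : IsStrictlyDezaGraph G n k b a) (hk : k = b + 1) {v u : V}
    (hadj : G.Adj v u) (hcom : (G.neighborFinset u ∩ G.neighborFinset v).card = b) :
    G.neighborFinset u = insert v ((G.neighborFinset v).erase u) := by
  have hcv := hdeg hG v
  have hcu := hdeg hG u
  have h1 : (G.neighborFinset v \ G.neighborFinset u).card = 1 := by
    have h' : (G.neighborFinset v ∩ G.neighborFinset u).card = b := by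
      rwa [Finset.inter_comm]
    have := Finset.card_inter_add_card_sdiff (G.neighborFinset v) (G.neighborFinset u)
    omega
  have h2 : (G.neighborFinset u \ G.neighborFinset v).card = 1 := by
    have := Finset.card_inter_add_card_sdiff (G.neighborFinset u) (G.neighborFinset v)
    omega
  obtain ⟨w1, hw1⟩ := Finset.card_eq_one.mp h1
  obtain ⟨w2, hw2⟩ := Finset.card_eq_one.mp h2
  have huw1 : u = w1 := by
    have : u ∈ G.neighborFinset v \ G.neighborFinset u :=
      Finset.mem_sdiff.mpr ⟨(SimpleGraph.mem_neighborFinset _ _ _).mpr hadj,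
        G.notMem_neighborFinset_self u⟩
    rw [hw1] at this
    exact Finset.mem_singleton.mp this
  have hvw2 : v = w2 := by
    have : v ∈ G.neighborFinset u \ G.neighborFinset v :=
      Finset.mem_sdiff.mpr ⟨(SimpleGraph.mem_neighborFinset _ _ _).mpr hadj.symm,
        G.notMem_neighborFinset_self v⟩
    rw [hw2] at this
    exact Finset.mem_singleton.mp this
  subst huw1
  subst hvw2
  have := split_nbhd hw2
  rwa [Finset.inter_comm, inter_eq_erase hw1] at this

end DezaAux3
section DezaAux4
set_option linter.unusedSectionVars false

variable {V : Type u} [Fintype V] [DecidableEq V] {G : SimpleGraph V}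
  [DecidableRel G.Adj] {n k b a : ℕ}

private lemma part1 (hG : IsStrictlyDezaGraph G n k b a) (hk : k = b + 1) {x xi : V}
    (hA : IsTypeA G b x) (hxi : xi ∈ dezaB G b x) :
    dezaB G b xi ∩ G.neighborFinset xi = ∅ := by
  have hab' := hab hG
  obtain ⟨yi, zi, hyi, hzi, hNxi, hyim, hziN, hzim, hxinx, hxNxi, hnadj, hxine⟩ :=
    exchB hG hk hA hxi
  by_contra hcon
  obtain ⟨u, hu⟩ := Finset.nonempty_of_ne_empty hcon
  obtain ⟨huB, huN⟩ := Finset.mem_inter.mp hu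
  obtain ⟨hune, hucom⟩ : u ≠ xi ∧ commonNbrs G u xi = b := by simpa [dezaB] using huB
  have hadj_u : G.Adj xi u := (SimpleGraph.mem_neighborFinset _ _ _).mp huN
  have hNu : G.neighborFinset u = insert xi ((G.neighborFinset xi).erase u) :=
    adjExch hG hk hadj_u hucom
  by_cases huz : u = zi
  · -- u = u : derive the contradiction via the common vertices in N(x) ∩ N(xi)
    subst huz
    have hzi_not : u ∉ (G.neighborFinset x).erase yi := fun h =>
      hzim (Finset.mem_of_mem_erase h)
    have hNu : G.neighborFinset u = insert xi ((G.neighborFinset x).erase yi) := by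
      rw [hNu, hNxi, Finset.erase_insert hzi_not]
    have hcardE : ((G.neighborFinset x).erase yi).card = b := by
      rw [Finset.card_erase_of_mem hyim, hdeg hG x]
      omega
    -- basic distinctness
    have hzix : u ≠ x := fun h => hxNxi (h ▸ hziN)
    have hxiu : xi ≠ u := fun h => (G.notMem_neighborFinset_self xi) (h ▸ hziN)
    -- memberships of any c in the eraser set
    have hcmem : ∀ c ∈ (G.neighborFinset x).erase yi,
        x ∈ G.neighborFinset c ∧ xi ∈ G.neighborFinset c ∧ u ∈ G.neighborFinset c := by
      intro c hc
      refine ⟨mem_nbr_symm (Finset.mem_of_mem_erase hc), ?_, ?_⟩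
      · exact mem_nbr_symm (by rw [hNxi]; exact Finset.mem_insert_of_mem hc)
      · exact mem_nbr_symm (by rw [hNu]; exact Finset.mem_insert_of_mem hc)
    -- Step A : a + 2 ≤ b
    obtain ⟨c0, hc0⟩ : ((G.neighborFinset x).erase yi).Nonempty := by
      rw [← Finset.card_pos, hcardE]
      omega
    obtain ⟨hxc0, hxic0, hzic0⟩ := hcmem c0 hc0
    have hba2 : a + 2 ≤ b := by
      have hacard : (G.neighborFinset c0 ∩ G.neighborFinset x).card = a :=
        hnbr hG hA (Finset.mem_of_mem_erase hc0)
      have hn1 : u ∉ G.neighborFinset c0 ∩ G.neighborFinset x := fun h =>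
        hzim (Finset.mem_inter.mp h).2
      have hn2 : xi ∉ insert u (G.neighborFinset c0 ∩ G.neighborFinset x) := by
        simp only [Finset.mem_insert, Finset.mem_inter]
        push_neg
        exact ⟨hxiu, fun _ h => hxinx h⟩
      have hn3 : x ∉ insert xi (insert u (G.neighborFinset c0 ∩ G.neighborFinset x)) := by
        simp only [Finset.mem_insert, Finset.mem_inter]
        push_neg
        exact ⟨Ne.symm hxine, Ne.symm hzix,
          fun _ h => (G.notMem_neighborFinset_self x) h⟩
      have hsub : insert x (insert xi (insert u
          (G.neighborFinset c0 ∩ G.neighborFinset x))) ⊆ G.neighborFinset c0 := by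
        intro w hw
        rcases Finset.mem_insert.mp hw with rfl | hw
        · exact hxc0
        rcases Finset.mem_insert.mp hw with rfl | hw
        · exact hxic0
        rcases Finset.mem_insert.mp hw with rfl | hw
        · exact hzic0
        · exact (Finset.mem_inter.mp hw).1
      have hcardS : (insert x (insert xi (insert u
          (G.neighborFinset c0 ∩ G.neighborFinset x)))).card = a + 3 := by
        rw [Finset.card_insert_of_notMem hn3, Finset.card_insert_of_notMem hn2,
          Finset.card_insert_of_notMem hn1, hacard]
      have := Finset.card_le_card hsub
      rw [hcardS, hdeg hG c0] at this
      omega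
    -- Step B : every c in the eraser set is adjacent to yi
    have hyiadj : ∀ c ∈ (G.neighborFinset x).erase yi, yi ∈ G.neighborFinset c := by
      intro c hc
      obtain ⟨hxc, hxic, hzic⟩ := hcmem c hc
      by_contra hyn
      have hcne : c ≠ xi := fun h => hxinx (h ▸ Finset.mem_of_mem_erase hc)
      have hcompute : commonNbrs G c xi = a + 1 := by
        show (G.neighborFinset c ∩ G.neighborFinset xi).card = a + 1
        rw [hNxi, Finset.inter_comm, Finset.insert_inter_of_mem hzic,
          Finset.card_insert_of_notMem (fun h => hzi_not (Finset.mem_inter.mp h).1),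
          Finset.erase_inter,
          Finset.erase_eq_of_notMem (fun h => hyn (Finset.mem_inter.mp h).2),
          Finset.inter_comm, hnbr hG hA (Finset.mem_of_mem_erase hc)]
      rcases hpair hG hcne with h | h <;> omega
    -- conclusion : b ≤ a, contradiction
    have hsub2 : (G.neighborFinset x).erase yi ⊆
        G.neighborFinset yi ∩ G.neighborFinset x := by
      intro c hc
      exact Finset.mem_inter.mpr ⟨mem_nbr_symm (hyiadj c hc), Finset.mem_of_mem_erase hc⟩
    have := Finset.card_le_card hsub2
    rw [hcardE, hnbr hG hA hyim] at this
    omega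
  · -- u ≠ zi : then u ∈ N(x), but x ∉ N(u), contradiction
    have humem : u ∈ (G.neighborFinset x).erase yi := by
      have := huN
      rw [hNxi] at this
      rcases Finset.mem_insert.mp this with rfl | h
      · exact absurd rfl huz
      · exact h
    have hxmemu : x ∈ G.neighborFinset u := mem_nbr_symm (Finset.mem_of_mem_erase humem)
    rw [hNu] at hxmemu
    rcases Finset.mem_insert.mp hxmemu with rfl | h
    · exact hxine rfl
    · exact hxNxi (Finset.mem_of_mem_erase h)

end DezaAux4
section DezaAux5
set_option linter.unusedSectionVars false
set_option maxHeartbeats 1000000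

variable {V : Type u} [Fintype V] [DecidableEq V] {G : SimpleGraph V}
  [DecidableRel G.Adj] {n k b a : ℕ}

private lemma part2 (hG : IsStrictlyDezaGraph G n k b a) (hk : k = b + 1) {x xi xj : V}
    (hA : IsTypeA G b x) (hxi : xi ∈ dezaB G b x) (hxj : xj ∈ dezaB G b x)
    (hne : xi ≠ xj) : commonNbrs G xi xj = b := by
  have hab' := hab hG
  obtain ⟨yi, zi, hyi, hzi, hNxi, hyim, hziN, hzim, hxinx, hxNxi, hnadji, hxine⟩ :=
    exchB hG hk hA hxi
  obtain ⟨yj, zj, hyj, hzj, hNxj, hyjm, hzjN, hzjm, hxjnx, hxNxj, hnadjj, hxjne⟩ :=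
    exchB hG hk hA hxj
  have hkx := hdeg hG x
  have hkk : 2 ≤ k := by omega
  have hyiE : yi ∉ (G.neighborFinset x).erase yi := Finset.notMem_erase _ _
  by_cases hyy : yi = yj
  · by_cases hzz : zi = zj
    · exfalso
      have hNeq : G.neighborFinset xi = G.neighborFinset xj := by
        rw [hNxi, hNxj, hyy, hzz]
      have hcom : commonNbrs G xi xj = k := by
        show (G.neighborFinset xi ∩ G.neighborFinset xj).card = k
        rw [hNeq, Finset.inter_self, hdeg hG xj]
      rcases hpair hG hne with h | h <;> omega
    · show (G.neighborFinset xi ∩ G.neighborFinset xj).card = b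
      have hS : G.neighborFinset xi ∩ G.neighborFinset xj =
          (G.neighborFinset x).erase yi := by
        rw [hNxi, hNxj, ← hyy]
        rw [Finset.insert_inter_of_notMem (by
          simp only [Finset.mem_insert]
          push_neg
          exact ⟨hzz, fun h => hzim (Finset.mem_of_mem_erase h)⟩)]
        rw [Finset.inter_comm, Finset.insert_inter_of_notMem
          (fun h => hzjm (Finset.mem_of_mem_erase h)), Finset.inter_self]
      rw [hS, Finset.card_erase_of_mem hyim, hkx]
      omega
  · by_cases hzz : zi = zj
    · show (G.neighborFinset xi ∩ G.neighborFinset xj).card = b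
      have hyjEi : yj ∈ (G.neighborFinset x).erase yi :=
        Finset.mem_erase.mpr ⟨Ne.symm hyy, hyjm⟩
      have hS : G.neighborFinset xi ∩ G.neighborFinset xj =
          insert zi (((G.neighborFinset x).erase yi).erase yj) := by
        rw [hNxi, hNxj, ← hzz]
        rw [Finset.insert_inter_of_mem (Finset.mem_insert_self _ _)]
        congr 1
        rw [Finset.inter_comm, Finset.insert_inter_of_notMem
          (fun h => hzim (Finset.mem_of_mem_erase h))]
        rw [Finset.erase_inter, Finset.inter_erase, Finset.inter_self]
      rw [hS, Finset.card_insert_of_notMem (fun h =>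
        hzim (Finset.mem_of_mem_erase (Finset.mem_of_mem_erase h)))]
      rw [Finset.card_erase_of_mem hyjEi, Finset.card_erase_of_mem hyim, hkx]
      omega
    · -- the hard case : yi ≠ yj and zi ≠ zj forces a = k - 2 and a contradiction
      exfalso
      have hyjEi : yj ∈ (G.neighborFinset x).erase yi :=
        Finset.mem_erase.mpr ⟨Ne.symm hyy, hyjm⟩
      have hS : G.neighborFinset xi ∩ G.neighborFinset xj =
          ((G.neighborFinset x).erase yi).erase yj := by
        rw [hNxi, hNxj]
        rw [Finset.insert_inter_of_notMem (by
          simp only [Finset.mem_insert]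
          push_neg
          exact ⟨hzz, fun h => hzim (Finset.mem_of_mem_erase h)⟩)]
        rw [Finset.inter_comm, Finset.insert_inter_of_notMem
          (fun h => hzjm (Finset.mem_of_mem_erase h))]
        rw [Finset.erase_inter, Finset.inter_erase, Finset.inter_self]
      have hcij : commonNbrs G xi xj + 2 = k := by
        show (G.neighborFinset xi ∩ G.neighborFinset xj).card + 2 = k
        rw [hS, Finset.card_erase_of_mem hyjEi, Finset.card_erase_of_mem hyim, hkx]
        have h1 : 1 ≤ (G.neighborFinset x).card := Finset.card_pos.mpr ⟨yi, hyim⟩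
        have h2 : 1 ≤ ((G.neighborFinset x).erase yi).card :=
          Finset.card_pos.mpr ⟨yj, hyjEi⟩
        rw [Finset.card_erase_of_mem hyim, hkx] at h2
        omega
      have hak : a + 2 = k := by
        rcases hpair hG hne with h | h <;> omega
      -- partner and outside-vertex structure for neighbours of x
      have hpartner : ∀ u ∈ G.neighborFinset x,
          ∃ p w, p ∈ G.neighborFinset x ∧ p ≠ u ∧ w ≠ x ∧ w ∉ G.neighborFinset x ∧
            G.neighborFinset x \ G.neighborFinset u = {u, p} ∧
            G.neighborFinset u \ G.neighborFinset x = {x, w} := by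
        intro u hu
        have hca : (G.neighborFinset u ∩ G.neighborFinset x).card = a := hnbr hG hA hu
        have hca' : (G.neighborFinset x ∩ G.neighborFinset u).card = a := by
          rwa [Finset.inter_comm]
        have hs1 : (G.neighborFinset x \ G.neighborFinset u).card = 2 := by
          have := Finset.card_inter_add_card_sdiff (G.neighborFinset x)
            (G.neighborFinset u)
          omega
        have hs2 : (G.neighborFinset u \ G.neighborFinset x).card = 2 := by
          have := Finset.card_inter_add_card_sdiff (G.neighborFinset u)
            (G.neighborFinset x)
          have := hdeg hG u
          omega
        obtain ⟨p, hp1, hp2, hp3⟩ := pair_extract hs1 (Finset.mem_sdiff.mpr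
          ⟨hu, G.notMem_neighborFinset_self u⟩)
        obtain ⟨w, hw1, hw2, hw3⟩ := pair_extract hs2 (Finset.mem_sdiff.mpr
          ⟨mem_nbr_symm hu, G.notMem_neighborFinset_self x⟩)
        exact ⟨p, w, (Finset.mem_sdiff.mp hp2).1, hp1, hw1,
          (Finset.mem_sdiff.mp hw2).2, hp3, hw3⟩
      -- key : a neighbour of x adjacent to y_m has its outside vertex equal to z_m
      have hkey : ∀ xm ym zm u w, xm ∉ G.neighborFinset x → ym ∈ G.neighborFinset x →
          G.neighborFinset xm = insert zm ((G.neighborFinset x).erase ym) →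
          zm ∉ G.neighborFinset x → zm ≠ x →
          u ∈ G.neighborFinset x → ym ∈ G.neighborFinset u →
          G.neighborFinset u \ G.neighborFinset x = {x, w} → w = zm := by
        intro xm ym zm u w hxm hymx hNm hzm hzmx hu hym hw
        have hca : (G.neighborFinset u ∩ G.neighborFinset x).card = a := hnbr hG hA hu
        have hyminter : ym ∈ G.neighborFinset x ∩ G.neighborFinset u :=
          Finset.mem_inter.mpr ⟨hymx, hym⟩
        have ha1 : 1 ≤ a := by
          have := Finset.card_pos.mpr ⟨ym, hyminter⟩
          rwa [Finset.inter_comm, hca] at this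
        by_cases hzu : zm ∈ G.neighborFinset u
        · have hmem : zm ∈ ({x, w} : Finset V) := hw ▸ Finset.mem_sdiff.mpr ⟨hzu, hzm⟩
          rcases Finset.mem_insert.mp hmem with h | h
          · exact absurd h hzmx
          · exact (Finset.mem_singleton.mp h).symm
        · exfalso
          have hune : u ≠ xm := fun h => hxm (h ▸ hu)
          have hcompute : commonNbrs G u xm = a - 1 := by
            show (G.neighborFinset u ∩ G.neighborFinset xm).card = a - 1
            rw [hNm, Finset.inter_comm, Finset.insert_inter_of_notMem hzu,
              Finset.erase_inter, Finset.card_erase_of_mem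
                (Finset.mem_inter.mpr ⟨hymx, hym⟩)]
            rw [Finset.inter_comm, hca]
          rcases hpair hG hune with h | h <;> omega
      -- every neighbour of x misses yi or yj
      have hcover : ∀ u ∈ G.neighborFinset x,
          yi ∉ G.neighborFinset u ∨ yj ∉ G.neighborFinset u := by
        intro u hu
        by_contra hcc
        push_neg at hcc
        obtain ⟨p, w, _, _, _, hwnx, _, hw⟩ := hpartner u hu
        have h1 := hkey xi yi zi u w hxinx hyim hNxi hzim
          (fun h => hxNxi (h ▸ hziN)) hu hcc.1 hw
        have h2 := hkey xj yj zj u w hxjnx hyjm hNxj hzjm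
          (fun h => hxNxj (h ▸ hzjN)) hu hcc.2 hw
        exact hzz (h1 ▸ h2)
      obtain ⟨pi, wi, hpiN, hpiy, hwix, hwinx, hseti, hwi⟩ := hpartner yi hyim
      obtain ⟨pj, wj, hpjN, hpjy, hwjx, hwjnx, hsetj, hwj⟩ := hpartner yj hyjm
      have hsubN : G.neighborFinset x ⊆ ({yi, pi, yj, pj} : Finset V) := by
        intro u hu
        rcases hcover u hu with h | h
        · have : u ∈ G.neighborFinset x \ G.neighborFinset yi :=
            Finset.mem_sdiff.mpr ⟨hu, fun hc => h (mem_nbr_symm hc)⟩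
          rw [hseti] at this
          rcases Finset.mem_insert.mp this with rfl | h'
          · simp
          · simp [Finset.mem_singleton.mp h']
        · have : u ∈ G.neighborFinset x \ G.neighborFinset yj :=
            Finset.mem_sdiff.mpr ⟨hu, fun hc => h (mem_nbr_symm hc)⟩
          rw [hsetj] at this
          rcases Finset.mem_insert.mp this with rfl | h'
          · simp
          · simp [Finset.mem_singleton.mp h']
      have hk4 : k ≤ 4 := by
        have hle := Finset.card_le_card hsubN
        have c2 := Finset.card_insert_le yj ({pj} : Finset V)
        have c3 := Finset.card_insert_le pi ({yj, pj} : Finset V)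
        have c4 := Finset.card_insert_le yi ({pi, yj, pj} : Finset V)
        have c1 : ({pj} : Finset V).card = 1 := Finset.card_singleton _
        omega
      -- partner symmetry facts
      have hpiny : pi ∉ G.neighborFinset yi := by
        have : pi ∈ G.neighborFinset x \ G.neighborFinset yi := by
          rw [hseti]; simp
        exact (Finset.mem_sdiff.mp this).2
      have hpjny : pj ∉ G.neighborFinset yj := by
        have : pj ∈ G.neighborFinset x \ G.neighborFinset yj := by
          rw [hsetj]; simp
        exact (Finset.mem_sdiff.mp this).2
      have hk234 : k = 2 ∨ k = 3 ∨ k = 4 := by omega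
      rcases hk234 with hk2 | hk3 | hk4'
      · -- k = 2
        have ha0 : a = 0 := by omega
        have hb1 : b = 1 := by omega
        have hNx2 : ({yi, yj} : Finset V) = G.neighborFinset x :=
          Finset.eq_of_subset_of_card_le (by
            intro v hv
            simp only [Finset.mem_insert, Finset.mem_singleton] at hv
            rcases hv with rfl | rfl
            exacts [hyim, hyjm])
            (by
              rw [hkx, Finset.card_insert_of_notMem (by simp [hyy]),
                Finset.card_singleton]
              omega)
        have hNxC : G.neighborFinset x = ({yi, yj} : Finset V) := hNx2.symm
        have hEi : (G.neighborFinset x).erase yi = {yj} := by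
          rw [hNxC, Finset.erase_insert (by simp [hyy])]
        have hEj : (G.neighborFinset x).erase yj = {yi} := by
          rw [hNxC, Finset.pair_comm, Finset.erase_insert (by simp [Ne.symm hyy])]
        have hNxiP : G.neighborFinset xi = ({zi, yj} : Finset V) := by rw [hNxi, hEi]
        have hNxjP : G.neighborFinset xj = ({zj, yi} : Finset V) := by rw [hNxj, hEj]
        have hxyi : x ≠ yi := not_self_nbr hyim
        have hxyj : x ≠ yj := not_self_nbr hyjm
        have hyixi : yi ≠ xi := fun h => hxinx (h ▸ hyim)
        have hyjxi : yj ≠ xi := fun h => hxinx (h ▸ hyjm)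
        have hyixj : yi ≠ xj := fun h => hxjnx (h ▸ hyim)
        have hyjxj : yj ≠ xj := fun h => hxjnx (h ▸ hyjm)
        have hzix : zi ≠ x := fun h => hxNxi (h ▸ hziN)
        have hzjx : zj ≠ x := fun h => hxNxj (h ▸ hzjN)
        have hzixi : zi ≠ xi := fun h => G.notMem_neighborFinset_self xi (h ▸ hziN)
        have hzjxj : zj ≠ xj := fun h => G.notMem_neighborFinset_self xj (h ▸ hzjN)
        have hxxi : x ≠ xi := Ne.symm hxine
        have hxxj : x ≠ xj := Ne.symm hxjne
        have hxjNyi : xj ∈ G.neighborFinset yi :=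
          mem_nbr_symm (by rw [hNxjP]; simp)
        have hxiNyj : xi ∈ G.neighborFinset yj :=
          mem_nbr_symm (by rw [hNxiP]; simp)
        have hNyi : ({x, xj} : Finset V) = G.neighborFinset yi :=
          Finset.eq_of_subset_of_card_le (by
            intro v hv
            simp only [Finset.mem_insert, Finset.mem_singleton] at hv
            rcases hv with rfl | rfl
            exacts [mem_nbr_symm hyim, hxjNyi])
            (by
              rw [hdeg hG yi, Finset.card_insert_of_notMem (by simp [hxxj]),
                Finset.card_singleton]
              omega)
        have hNyj : ({x, xi} : Finset V) = G.neighborFinset yj :=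
          Finset.eq_of_subset_of_card_le (by
            intro v hv
            simp only [Finset.mem_insert, Finset.mem_singleton] at hv
            rcases hv with rfl | rfl
            exacts [mem_nbr_symm hyjm, hxiNyj])
            (by
              rw [hdeg hG yj, Finset.card_insert_of_notMem (by simp [hxxi]),
                Finset.card_singleton]
              omega)
        have hNyiC : G.neighborFinset yi = ({x, xj} : Finset V) := hNyi.symm
        have hNyjC : G.neighborFinset yj = ({x, xi} : Finset V) := hNyj.symm
        by_cases hzixj : zi = xj
        · -- the five vertices form a pentagon : the graph is strongly regular
          have hxizj : xi = zj := by
            have hxiNxj : xi ∈ G.neighborFinset xj :=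
              mem_nbr_symm (by rw [hNxiP, hzixj]; simp)
            rw [hNxjP] at hxiNxj
            simp only [Finset.mem_insert, Finset.mem_singleton] at hxiNxj
            rcases hxiNxj with h | h
            · exact h
            · exact absurd h.symm hyixi
          have hNxiC : G.neighborFinset xi = ({xj, yj} : Finset V) := by
            rw [hNxiP, hzixj]
          have hNxjC : G.neighborFinset xj = ({xi, yi} : Finset V) := by
            rw [hNxjP, ← hxizj]
          have hT : ∀ v : V, v = x ∨ v = yi ∨ v = yj ∨ v = xi ∨ v = xj := by
            intro v
            by_contra hc
            push_neg at hc
            obtain ⟨h1, h2, h3, h4, h5⟩ := hc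
            have hvnx : ¬ G.Adj v x := by
              intro hadj
              have hmem : v ∈ G.neighborFinset x :=
                (SimpleGraph.mem_neighborFinset _ _ _).mpr hadj.symm
              rw [hNxC] at hmem
              simp only [Finset.mem_insert, Finset.mem_singleton] at hmem
              rcases hmem with h | h
              exacts [h2 h, h3 h]
            have hnz := hpos hG h1 hvnx
            obtain ⟨m, hm⟩ := Finset.card_pos.mp (Nat.pos_of_ne_zero hnz)
            obtain ⟨hm1, hm2⟩ := Finset.mem_inter.mp hm
            rw [hNxC] at hm2
            simp only [Finset.mem_insert, Finset.mem_singleton] at hm2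
            rcases hm2 with rfl | rfl
            · have hmem := mem_nbr_symm hm1
              rw [hNyiC] at hmem
              simp only [Finset.mem_insert, Finset.mem_singleton] at hmem
              rcases hmem with h | h
              exacts [h1 h, h5 h]
            · have hmem := mem_nbr_symm hm1
              rw [hNyjC] at hmem
              simp only [Finset.mem_insert, Finset.mem_singleton] at hmem
              rcases hmem with h | h
              exacts [h1 h, h4 h]
          apply hG.2.2.2.2
          refine ⟨a, b, hG.1.2.1, hG.1.2.2.1, ?_, ?_⟩
          · intro v w hadj
            rw [card_cn, ha0]
            have hwv : w ∈ G.neighborFinset v := (SimpleGraph.mem_neighborFinset _ _ _).mpr hadj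
            rcases hT v with hv | hv | hv | hv | hv <;> rw [hv] at hwv ⊢
            · rw [hNxC] at hwv
              simp only [Finset.mem_insert, Finset.mem_singleton] at hwv
              rcases hwv with hw | hw <;> rw [hw]
              · show (G.neighborFinset x ∩ G.neighborFinset yi).card = 0
                rw [hNxC, hNyiC]
                exact pair_inter_card_zero (Ne.symm hxyi) hyixj (Ne.symm hxyj) hyjxj
              · show (G.neighborFinset x ∩ G.neighborFinset yj).card = 0
                rw [hNxC, hNyjC]
                exact pair_inter_card_zero (Ne.symm hxyi) hyixi (Ne.symm hxyj) hyjxi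
            · rw [hNyiC] at hwv
              simp only [Finset.mem_insert, Finset.mem_singleton] at hwv
              rcases hwv with hw | hw <;> rw [hw]
              · show (G.neighborFinset yi ∩ G.neighborFinset x).card = 0
                rw [hNyiC, hNxC]
                exact pair_inter_card_zero hxyi hxyj (Ne.symm hyixj) (Ne.symm hyjxj)
              · show (G.neighborFinset yi ∩ G.neighborFinset xj).card = 0
                rw [hNyiC, hNxjC]
                exact pair_inter_card_zero hxxi hxyi (Ne.symm hne) (Ne.symm hyixj)
            · rw [hNyjC] at hwv
              simp only [Finset.mem_insert, Finset.mem_singleton] at hwv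
              rcases hwv with hw | hw <;> rw [hw]
              · show (G.neighborFinset yj ∩ G.neighborFinset x).card = 0
                rw [hNyjC, hNxC]
                exact pair_inter_card_zero hxyi hxyj (Ne.symm hyixi) (Ne.symm hyjxi)
              · show (G.neighborFinset yj ∩ G.neighborFinset xi).card = 0
                rw [hNyjC, hNxiC]
                exact pair_inter_card_zero hxxj hxyj hne (Ne.symm hyjxi)
            · rw [hNxiC] at hwv
              simp only [Finset.mem_insert, Finset.mem_singleton] at hwv
              rcases hwv with hw | hw <;> rw [hw]
              · show (G.neighborFinset xi ∩ G.neighborFinset xj).card = 0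
                rw [hNxiC, hNxjC]
                exact pair_inter_card_zero (Ne.symm hne) (Ne.symm hyixj) hyjxi (Ne.symm hyy)
              · show (G.neighborFinset xi ∩ G.neighborFinset yj).card = 0
                rw [hNxiC, hNyjC]
                exact pair_inter_card_zero (Ne.symm hxxj) (Ne.symm hne) (Ne.symm hxyj) hyjxi
            · rw [hNxjC] at hwv
              simp only [Finset.mem_insert, Finset.mem_singleton] at hwv
              rcases hwv with hw | hw <;> rw [hw]
              · show (G.neighborFinset xj ∩ G.neighborFinset xi).card = 0
                rw [hNxjC, hNxiC]
                exact pair_inter_card_zero hne (Ne.symm hyjxi) hyixj hyy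
              · show (G.neighborFinset xj ∩ G.neighborFinset yi).card = 0
                rw [hNxjC, hNyiC]
                exact pair_inter_card_zero (Ne.symm hxxi) hne (Ne.symm hxyi) hyixj
          · intro v w hvw hnadj
            rw [card_cn, hb1]
            rcases hT v with hv | hv | hv | hv | hv <;> rcases hT w with hw | hw | hw | hw | hw <;> rw [hv, hw] at hvw hnadj ⊢
            · exact absurd rfl hvw
            · exact absurd ((SimpleGraph.mem_neighborFinset _ _ _).mp (by rw [hNxC]; simp)) hnadj
            · exact absurd ((SimpleGraph.mem_neighborFinset _ _ _).mp (by rw [hNxC]; simp)) hnadj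
            · show (G.neighborFinset x ∩ G.neighborFinset xi).card = 1
              rw [hNxC, hNxiC]
              exact pair_inter_one_22 hyixj hyy
            · show (G.neighborFinset x ∩ G.neighborFinset xj).card = 1
              rw [hNxC, hNxjC]
              exact pair_inter_one_12 hyjxi (Ne.symm hyy)
            · exact absurd ((SimpleGraph.mem_neighborFinset _ _ _).mp (by rw [hNyiC]; simp)) hnadj
            · exact absurd rfl hvw
            · show (G.neighborFinset yi ∩ G.neighborFinset yj).card = 1
              rw [hNyiC, hNyjC]
              exact pair_inter_one_11 (Ne.symm hxxj) (Ne.symm hne)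
            · show (G.neighborFinset yi ∩ G.neighborFinset xi).card = 1
              rw [hNyiC, hNxiC]
              exact pair_inter_one_21 hxxj hxyj
            · exact absurd ((SimpleGraph.mem_neighborFinset _ _ _).mp (by rw [hNyiC]; simp)) hnadj
            · exact absurd ((SimpleGraph.mem_neighborFinset _ _ _).mp (by rw [hNyjC]; simp)) hnadj
            · show (G.neighborFinset yj ∩ G.neighborFinset yi).card = 1
              rw [hNyjC, hNyiC]
              exact pair_inter_one_11 (Ne.symm hxxi) hne
            · exact absurd rfl hvw
            · exact absurd ((SimpleGraph.mem_neighborFinset _ _ _).mp (by rw [hNyjC]; simp)) hnadj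
            · show (G.neighborFinset yj ∩ G.neighborFinset xj).card = 1
              rw [hNyjC, hNxjC]
              exact pair_inter_one_21 hxxi hxyi
            · show (G.neighborFinset xi ∩ G.neighborFinset x).card = 1
              rw [hNxiC, hNxC]
              exact pair_inter_one_22 (Ne.symm hyixj) (Ne.symm hyjxj)
            · show (G.neighborFinset xi ∩ G.neighborFinset yi).card = 1
              rw [hNxiC, hNyiC]
              exact pair_inter_one_12 (Ne.symm hxyj) hyjxj
            · exact absurd ((SimpleGraph.mem_neighborFinset _ _ _).mp (by rw [hNxiC]; simp)) hnadj
            · exact absurd rfl hvw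
            · exact absurd ((SimpleGraph.mem_neighborFinset _ _ _).mp (by rw [hNxiC]; simp)) hnadj
            · show (G.neighborFinset xj ∩ G.neighborFinset x).card = 1
              rw [hNxjC, hNxC]
              exact pair_inter_one_21 (Ne.symm hyixi) (Ne.symm hyjxi)
            · exact absurd ((SimpleGraph.mem_neighborFinset _ _ _).mp (by rw [hNxjC]; simp)) hnadj
            · show (G.neighborFinset xj ∩ G.neighborFinset yj).card = 1
              rw [hNxjC, hNyjC]
              exact pair_inter_one_12 (Ne.symm hxyi) hyixi
            · exact absurd ((SimpleGraph.mem_neighborFinset _ _ _).mp (by rw [hNxjC]; simp)) hnadj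
            · exact absurd rfl hvw
        · -- zi ≠ xj : the vertex zi would be at distance 3 from x
          have hziNyi : zi ∉ G.neighborFinset yi := by
            rw [hNyiC]
            simp only [Finset.mem_insert, Finset.mem_singleton]
            push_neg
            exact ⟨hzix, hzixj⟩
          have hziNyj : zi ∉ G.neighborFinset yj := by
            rw [hNyjC]
            simp only [Finset.mem_insert, Finset.mem_singleton]
            push_neg
            exact ⟨hzix, hzixi⟩
          have h0 : commonNbrs G zi x = 0 := by
            show (G.neighborFinset zi ∩ G.neighborFinset x).card = 0
            rw [hNxC, Finset.card_eq_zero, Finset.eq_empty_iff_forall_notMem]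
            intro t ht
            obtain ⟨ht1, ht2⟩ := Finset.mem_inter.mp ht
            simp only [Finset.mem_insert, Finset.mem_singleton] at ht2
            rcases ht2 with rfl | rfl
            · exact hziNyi (mem_nbr_symm ht1)
            · exact hziNyj (mem_nbr_symm ht1)
          exact hpos hG hzix (fun hadj =>
            hzim ((SimpleGraph.mem_neighborFinset _ _ _).mpr hadj.symm)) h0
      · -- k = 3
        obtain ⟨t, ht⟩ : (G.neighborFinset x \ ({yi, pi} : Finset V)).Nonempty := by
          rw [← Finset.card_pos]
          have h1 := Finset.le_card_sdiff ({yi, pi} : Finset V) (G.neighborFinset x)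
          have h2 := Finset.card_insert_le yi ({pi} : Finset V)
          have h3 : ({pi} : Finset V).card = 1 := Finset.card_singleton _
          omega
        obtain ⟨htN, htne⟩ := Finset.mem_sdiff.mp ht
        have htyi : t ≠ yi := fun h => htne (by simp [h])
        have htpi : t ≠ pi := fun h => htne (by simp [h])
        obtain ⟨pt, wt, hptN, hptt, _, _, hsett, _⟩ := hpartner t htN
        have hcard3 : ({yi, pi, t} : Finset V).card = 3 := by
          rw [Finset.card_insert_of_notMem (by simp [Ne.symm hpiy, Ne.symm htyi]),
            Finset.card_insert_of_notMem (by simp [Ne.symm htpi]), Finset.card_singleton]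
        have hsub3 : ({yi, pi, t} : Finset V) ⊆ G.neighborFinset x := by
          intro v hv
          simp only [Finset.mem_insert, Finset.mem_singleton] at hv
          rcases hv with rfl | rfl | rfl
          exacts [hyim, hpiN, htN]
        have hNx3 : ({yi, pi, t} : Finset V) = G.neighborFinset x :=
          Finset.eq_of_subset_of_card_le hsub3 (by rw [hkx, hcard3]; omega)
        have hptnt : pt ∉ G.neighborFinset t := by
          have : pt ∈ G.neighborFinset x \ G.neighborFinset t := by rw [hsett]; simp
          exact (Finset.mem_sdiff.mp this).2
        have hptmem : pt ∈ ({yi, pi, t} : Finset V) := by rw [hNx3]; exact hptN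
        simp only [Finset.mem_insert, Finset.mem_singleton] at hptmem
        rcases hptmem with rfl | rfl | rfl
        · have : t ∈ G.neighborFinset x \ G.neighborFinset pt :=
            Finset.mem_sdiff.mpr ⟨htN, not_mem_nbr_symm hptnt⟩
          rw [hseti] at this
          rcases Finset.mem_insert.mp this with h | h
          · exact htyi h
          · exact htpi (Finset.mem_singleton.mp h)
        · obtain ⟨ppi, wpi, hppiN, hppine, _, _, hsetpi, _⟩ := hpartner pt hpiN
          have hyimem : yi ∈ G.neighborFinset x \ G.neighborFinset pt :=
            Finset.mem_sdiff.mpr ⟨hyim, not_mem_nbr_symm hpiny⟩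
          rw [hsetpi] at hyimem
          have hppi : ppi = yi := by
            rcases Finset.mem_insert.mp hyimem with h | h
            · exact absurd h.symm hpiy
            · exact (Finset.mem_singleton.mp h).symm
          have : t ∈ G.neighborFinset x \ G.neighborFinset pt :=
            Finset.mem_sdiff.mpr ⟨htN, not_mem_nbr_symm hptnt⟩
          rw [hsetpi, hppi] at this
          rcases Finset.mem_insert.mp this with h | h
          · exact htpi h
          · exact htyi (Finset.mem_singleton.mp h)
        · exact hptt rfl
      · -- k = 4
        have hadjyy : yj ∈ G.neighborFinset yi := by
          by_contra hc
          have h1 : yj ∈ G.neighborFinset x \ G.neighborFinset yi :=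
            Finset.mem_sdiff.mpr ⟨hyjm, hc⟩
          rw [hseti] at h1
          have hyjpi : yj = pi := by
            rcases Finset.mem_insert.mp h1 with h | h
            · exact absurd h.symm hyy
            · exact Finset.mem_singleton.mp h
          have h2 : yi ∈ G.neighborFinset x \ G.neighborFinset yj :=
            Finset.mem_sdiff.mpr ⟨hyim, not_mem_nbr_symm hc⟩
          rw [hsetj] at h2
          have hyipj : yi = pj := by
            rcases Finset.mem_insert.mp h2 with h | h
            · exact absurd h hyy
            · exact Finset.mem_singleton.mp h
          have hsub2' : G.neighborFinset x ⊆ ({yi, yj} : Finset V) := by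
            intro v hv
            have hv' := hsubN hv
            simp only [Finset.mem_insert, Finset.mem_singleton] at hv' ⊢
            rcases hv' with h | h | h | h
            exacts [Or.inl h, Or.inr (h.trans hyjpi.symm), Or.inr h,
              Or.inl (h.trans hyipj.symm)]
          have hc1 := Finset.card_le_card hsub2'
          have hc2 := Finset.card_insert_le yi ({yj} : Finset V)
          have hc3 : ({yj} : Finset V).card = 1 := Finset.card_singleton _
          omega
        have hadjyy' : yi ∈ G.neighborFinset yj := mem_nbr_symm hadjyy
        have hpiyj : pi ≠ yj := fun h => hpiny (by rw [h]; exact hadjyy)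
        have hpjyi : pj ≠ yi := fun h => hpjny (by rw [h]; exact hadjyy')
        obtain ⟨ppi, wpi, hppiN, _, hwpix, hwpinx, hsetpi, hwpi⟩ := hpartner pi hpiN
        have hppiyi : ppi = yi := by
          have hyimem : yi ∈ G.neighborFinset x \ G.neighborFinset pi :=
            Finset.mem_sdiff.mpr ⟨hyim, not_mem_nbr_symm hpiny⟩
          rw [hsetpi] at hyimem
          rcases Finset.mem_insert.mp hyimem with h | h
          · exact absurd h.symm hpiy
          · exact (Finset.mem_singleton.mp h).symm
        obtain ⟨ppj, wpj, hppjN, _, hwpjx, hwpjnx, hsetpj, hwpj⟩ := hpartner pj hpjN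
        have hppjyj : ppj = yj := by
          have hyjmem : yj ∈ G.neighborFinset x \ G.neighborFinset pj :=
            Finset.mem_sdiff.mpr ⟨hyjm, not_mem_nbr_symm hpjny⟩
          rw [hsetpj] at hyjmem
          rcases Finset.mem_insert.mp hyjmem with h | h
          · exact absurd h.symm hpjy
          · exact (Finset.mem_singleton.mp h).symm
        have hpipj : pi ≠ pj := by
          intro h
          have hyjmem : yj ∈ G.neighborFinset x \ G.neighborFinset pi := by
            rw [h]
            exact Finset.mem_sdiff.mpr ⟨hyjm, not_mem_nbr_symm hpjny⟩
          rw [hsetpi, hppiyi] at hyjmem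
          rcases Finset.mem_insert.mp hyjmem with h' | h'
          · exact hpiyj h'.symm
          · exact hyy (Finset.mem_singleton.mp h').symm
        have hcard4 : ({yi, pi, yj, pj} : Finset V).card = 4 := by
          rw [Finset.card_insert_of_notMem (by simp [Ne.symm hpiy, hyy, Ne.symm hpjyi]),
            Finset.card_insert_of_notMem (by simp [hpiyj, hpipj]),
            Finset.card_insert_of_notMem (by simp [Ne.symm hpjy]), Finset.card_singleton]
        have hNx4 : ({yi, pi, yj, pj} : Finset V) = G.neighborFinset x :=
          Finset.eq_of_subset_of_card_le (by
            intro v hv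
            simp only [Finset.mem_insert, Finset.mem_singleton] at hv
            rcases hv with rfl | rfl | rfl | rfl
            exacts [hyim, hpiN, hyjm, hpjN]) (by rw [hkx, hcard4]; omega)
        have hpjNyi : pj ∈ G.neighborFinset yi := by
          by_contra hc
          have hmem : pj ∈ G.neighborFinset x \ G.neighborFinset yi :=
            Finset.mem_sdiff.mpr ⟨hpjN, hc⟩
          rw [hseti] at hmem
          rcases Finset.mem_insert.mp hmem with h | h
          · exact hpjyi h
          · exact hpipj (Finset.mem_singleton.mp h).symm
        have hpiNyj : pi ∈ G.neighborFinset yj := by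
          by_contra hc
          have hmem : pi ∈ G.neighborFinset x \ G.neighborFinset yj :=
            Finset.mem_sdiff.mpr ⟨hpiN, hc⟩
          rw [hsetj] at hmem
          rcases Finset.mem_insert.mp hmem with h | h
          · exact hpiyj h
          · exact hpipj (Finset.mem_singleton.mp h)
        have hwizj : wi = zj := hkey xj yj zj yi wi hxjnx hyjm hNxj hzjm
          (fun h => hxNxj (h ▸ hzjN)) hyim hadjyy hwi
        have hwpizj : wpi = zj := hkey xj yj zj pi wpi hxjnx hyjm hNxj hzjm
          (fun h => hxNxj (h ▸ hzjN)) hpiN (mem_nbr_symm hpiNyj) hwpi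
        have h1 : G.neighborFinset x ∩ G.neighborFinset yi =
            G.neighborFinset x \ ({yi, pi} : Finset V) := by
          rw [← hseti]
          exact (Finset.sdiff_sdiff_self_left _ _).symm
        have h1' : G.neighborFinset x ∩ G.neighborFinset pi =
            G.neighborFinset x \ ({pi, yi} : Finset V) := by
          rw [← hppiyi, ← hsetpi]
          exact (Finset.sdiff_sdiff_self_left _ _).symm
        have hinter_yi : G.neighborFinset x ∩ G.neighborFinset yi =
            ({yj, pj} : Finset V) := by
          rw [h1, ← hNx4]
          ext v
          simp only [Finset.mem_sdiff, Finset.mem_insert, Finset.mem_singleton, not_or]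
          constructor
          · rintro ⟨(rfl | rfl | rfl | rfl), hn⟩
            · exact absurd rfl hn.1
            · exact absurd rfl hn.2
            · exact Or.inl rfl
            · exact Or.inr rfl
          · rintro (rfl | rfl)
            · exact ⟨Or.inr (Or.inr (Or.inl rfl)), Ne.symm hyy, fun h => hpiyj h.symm⟩
            · exact ⟨Or.inr (Or.inr (Or.inr rfl)), hpjyi, fun h => hpipj h.symm⟩
        have hinter_pi : G.neighborFinset x ∩ G.neighborFinset pi =
            ({yj, pj} : Finset V) := by
          rw [h1', ← hNx4]
          ext v
          simp only [Finset.mem_sdiff, Finset.mem_insert, Finset.mem_singleton, not_or]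
          constructor
          · rintro ⟨(rfl | rfl | rfl | rfl), hn⟩
            · exact absurd rfl hn.2
            · exact absurd rfl hn.1
            · exact Or.inl rfl
            · exact Or.inr rfl
          · rintro (rfl | rfl)
            · exact ⟨Or.inr (Or.inr (Or.inl rfl)), fun h => hpiyj h.symm, Ne.symm hyy⟩
            · exact ⟨Or.inr (Or.inr (Or.inr rfl)), fun h => hpipj h.symm, hpjyi⟩
        have hNyi : G.neighborFinset yi = ({yj, pj} : Finset V) ∪ ({x, zj} : Finset V) := by
          have hu := inter_union_sdiff' (G.neighborFinset yi) (G.neighborFinset x)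
          rw [← hu, Finset.inter_comm, hinter_yi, hwi, hwizj]
        have hNpi : G.neighborFinset pi = ({yj, pj} : Finset V) ∪ ({x, zj} : Finset V) := by
          have hu := inter_union_sdiff' (G.neighborFinset pi) (G.neighborFinset x)
          rw [← hu, Finset.inter_comm, hinter_pi, hwpi, hwpizj]
        have hfinal : commonNbrs G yi pi = k := by
          show (G.neighborFinset yi ∩ G.neighborFinset pi).card = k
          rw [hNpi, ← hNyi, Finset.inter_self, hdeg hG yi]
        rcases hpair hG (Ne.symm hpiy) with h | h <;> omega

end DezaAux5
theorem stmt8 {V : Type u} [Fintype V] [DecidableEq V] (G : SimpleGraph V)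
    [DecidableRel G.Adj] (n k b a : ℕ)
    (hG : IsStrictlyDezaGraph G n k b a) (hk : k = b + 1)
    (hβ : ∀ v : V, 1 < (dezaB G b v).card) :
    ∀ x xi : V, IsTypeA G b x → xi ∈ dezaB G b x →
      dezaBc G b x = dezaBc G b xi ∧
      dezaB G b xi ∩ G.neighborFinset xi = ∅ ∧
      IsTypeA G b xi := by
  intro x xi hA hxi
  have hxA' : dezaB G b xi ∩ G.neighborFinset xi = ∅ := part1 hG hk hA hxi
  have hAxi : IsTypeA G b xi := hxA'
  obtain ⟨hxine, hxicom⟩ : xi ≠ x ∧ commonNbrs G xi x = b := by simpa [dezaB] using hxi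
  have hxmem : x ∈ dezaB G b xi := by
    simp only [dezaB, Finset.mem_filter, Finset.mem_univ, true_and]
    exact ⟨Ne.symm hxine, by rw [commonNbrs_comm]; exact hxicom⟩
  refine ⟨?_, hxA', hAxi⟩
  ext u
  simp only [dezaBc, Finset.mem_insert]
  constructor
  · rintro (rfl | hu)
    · exact Or.inr hxmem
    · by_cases huxi : u = xi
      · exact Or.inl huxi
      · right
        have hcom : commonNbrs G xi u = b :=
          part2 hG hk hA hxi hu (fun h => huxi h.symm)
        simp only [dezaB, Finset.mem_filter, Finset.mem_univ, true_and]
        exact ⟨huxi, by rw [commonNbrs_comm]; exact hcom⟩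
  · rintro (rfl | hu)
    · exact Or.inr hxi
    · by_cases hux : u = x
      · exact Or.inl hux
      · right
        have hcom : commonNbrs G x u = b :=
          part2 hG hk hAxi hxmem hu (fun h => hux h.symm)
        simp only [dezaB, Finset.mem_filter, Finset.mem_univ, true_and]
        exact ⟨hux, by rw [commonNbrs_comm]; exact hcom⟩
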